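/- Let γ ∈ (0,1). The set of solutions in [0,1] of the fixed-point equation g_γ(p) = p is exactly {0, (1−γ)/2, 1}. Moreover g_γ(p) < p for all p ∈ (0, (1−γ)/2), and g_γ(p) > p for all p ∈ ((1−γ)/2, 1). -/

import Mathlib

/-- The voting function `g_γ`. -/
noncomputable def voteg (γ p₁ p₂ p₃ : ℝ) : ℝ :=
  p₁ * p₂ * p₃ + p₁ * p₂ * (1 - p₃) + p₁ * (1 - p₂) * p₃ + (1 - p₁) * p₂ * p₃
    + (2 * γ / (3 + 3 * γ)) *
      ((1 - p₁) * (1 - p₂) * p₃ + (1 - p₁) * p₂ * (1 - p₃) + p₁ * (1 - p₂) * (1 - p₃))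

/-- The diagonal voting function `g_γ(p) := g_γ(p,p,p)`. -/
noncomputable def votegd (γ p : ℝ) : ℝ := voteg γ p p p

lemma votegd_sub (γ p : ℝ) (hγ : 0 < γ) :
    votegd γ p - p = p * (1 - p) * (2 * p - (1 - γ)) / (1 + γ) := by
  have h1 : (3 : ℝ) + 3 * γ ≠ 0 := by nlinarith
  have h2 : (1 : ℝ) + γ ≠ 0 := by nlinarith
  unfold votegd voteg
  field_simp
  ring

/-- on `[0,1]` the fixed points of `g_γ` are exactly
`0, (1-γ)/2, 1`, with `g_γ(p) < p` on `(0,(1-γ)/2)` and `g_γ(p) > p` on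
`((1-γ)/2, 1)`. -/
theorem voteg_fixed_points (γ : ℝ) (hγ : γ ∈ Set.Ioo (0 : ℝ) 1) :
    ({p : ℝ | p ∈ Set.Icc (0 : ℝ) 1 ∧ votegd γ p = p} =
      {0, (1 - γ) / 2, 1}) ∧
    (∀ p ∈ Set.Ioo (0 : ℝ) ((1 - γ) / 2), votegd γ p < p) ∧
    (∀ p ∈ Set.Ioo ((1 - γ) / 2) (1 : ℝ), p < votegd γ p) := by
  obtain ⟨hγ0, hγ1⟩ := hγ
  have h2 : (0 : ℝ) < 1 + γ := by linarith
  refine ⟨?_, ?_, ?_⟩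
  · ext p
    simp only [Set.mem_setOf_eq, Set.mem_insert_iff, Set.mem_singleton_iff, Set.mem_Icc]
    constructor
    · rintro ⟨⟨h0, h1⟩, hfix⟩
      have key := votegd_sub γ p hγ0
      rw [hfix, sub_self] at key
      field_simp at key
      have key : p * (1 - p) * (2 * p - (1 - γ)) = 0 := by linarith
      rw [mul_eq_zero] at key
      rcases key with h | h
      · rcases mul_eq_zero.mp h with h | h
        · left; exact h
        · right; right; linarith
      · right; left; linarith
    · rintro (rfl | rfl | rfl)
      · have key := votegd_sub γ 0 hγ0
        constructor
        · constructor <;> norm_num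
        · have : votegd γ 0 - 0 = 0 := by rw [key]; ring
          linarith
      · have key := votegd_sub γ ((1 - γ) / 2) hγ0
        constructor
        · constructor <;> [linarith; linarith]
        · have : votegd γ ((1 - γ) / 2) - (1 - γ) / 2 = 0 := by rw [key]; ring
          linarith
      · have key := votegd_sub γ 1 hγ0
        constructor
        · constructor <;> norm_num
        · have : votegd γ 1 - 1 = 0 := by rw [key]; ring
          linarith
  · rintro p ⟨hp0, hp1⟩
    have key := votegd_sub γ p hγ0
    have hneg : p * (1 - p) * (2 * p - (1 - γ)) / (1 + γ) < 0 := by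
      apply div_neg_of_neg_of_pos _ h2
      have h1 : 2 * p - (1 - γ) < 0 := by linarith
      exact mul_neg_of_pos_of_neg (mul_pos hp0 (by linarith)) h1
    linarith
  · rintro p ⟨hp0, hp1⟩
    have key := votegd_sub γ p hγ0
    have hpos : 0 < p * (1 - p) * (2 * p - (1 - γ)) / (1 + γ) := by
      apply div_pos _ h2
      have h1 : 0 < 2 * p - (1 - γ) := by linarith
      have h3 : 0 < p := by nlinarith
      exact mul_pos (mul_pos h3 (by linarith)) h1
    linarith
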